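/- The 2×2 quaternion matrix A with entries A₁₁ = 1 - j·i, A₁₂ = j + i, A₂₁ = -i, A₂₂ = 1 has row left rank equal to 1 but row right rank equal to 2; in particular, the row left rank and row right rank of a quaternion matrix need not coincide. -/

import Mathlib

/-- The row left rank of a quaternion matrix: the rank (dimension of the span, with
quaternion scalars acting on the left) of the set of rows of `A`. -/
noncomputable def rowLeftRank {m n : Type*} (A : Matrix m n (Quaternion ℝ)) : ℕ :=
  (Module.rank (Quaternion ℝ)
    (Submodule.span (Quaternion ℝ) (Set.range (fun i j => A i j)))).toNat

/-- The row right rank: scalars act on the right, i.e. over the opposite ring. -/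
noncomputable def rowRightRank {m n : Type*} (A : Matrix m n (Quaternion ℝ)) : ℕ :=
  (Module.rank (Quaternion ℝ)ᵐᵒᵖ
    (Submodule.span (Quaternion ℝ)ᵐᵒᵖ (Set.range (fun i j => A i j)))).toNat

/-- The column right rank: the span of the columns with scalars acting on the right. -/
noncomputable def colRightRank {m n : Type*} (A : Matrix m n (Quaternion ℝ)) : ℕ :=
  (Module.rank (Quaternion ℝ)ᵐᵒᵖ
    (Submodule.span (Quaternion ℝ)ᵐᵒᵖ (Set.range (fun j i => A i j)))).toNat

/-- A quaternion unit gain graph on vertex type `V`. -/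
structure QuaternionUnitGainGraph (V : Type*) where
  G : SimpleGraph V
  gain : V → V → Quaternion ℝ
  gain_unit : ∀ u v, G.Adj u v → ‖gain u v‖ = 1
  gain_inv : ∀ u v, G.Adj u v → gain v u = star (gain u v)
  gain_zero : ∀ u v, ¬ G.Adj u v → gain u v = 0

/-- The (Hermitian, quaternion) adjacency matrix of a quaternion unit gain graph. -/
def QuaternionUnitGainGraph.adjMatrix {V : Type*} (Φ : QuaternionUnitGainGraph V) :
    Matrix V V (Quaternion ℝ) := fun u v => Φ.gain u v

/-- The row left rank of a quaternion unit gain graph. -/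
noncomputable def QuaternionUnitGainGraph.rank {V : Type*} (Φ : QuaternionUnitGainGraph V) : ℕ :=
  rowLeftRank Φ.adjMatrix

/-- The quaternion `i`. -/
def qI : Quaternion ℝ := ⟨0, 1, 0, 0⟩
/-- The quaternion `j`. -/
def qJ : Quaternion ℝ := ⟨0, 0, 1, 0⟩

/-- The explicit 2×2 quaternion matrix whose row left rank is 1 but whose
row right rank is 2: the two ranks of a quaternion matrix need not coincide. -/
theorem rowLeftRank_ne_rowRightRank_example :
    rowLeftRank !![1 - qJ * qI, qJ + qI; -qI, 1] = 1 ∧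
    rowRightRank !![1 - qJ * qI, qJ + qI; -qI, 1] = 2 := by
  set A : Matrix (Fin 2) (Fin 2) (Quaternion ℝ) := !![1 - qJ * qI, qJ + qI; -qI, 1] with hA
  have hv : (fun i j => A i j) = fun i => A i := rfl
  have hrange : Set.range (fun i j => A i j) = {A 0, A 1} := by
    rw [hv]
    ext x
    constructor
    · rintro ⟨i, rfl⟩; fin_cases i <;> simp
    · rintro (rfl | rfl) <;> [exact ⟨0, rfl⟩; exact ⟨1, rfl⟩]
  have h00 : A 0 0 = 1 - qJ * qI := by simp [hA]
  have h01 : A 0 1 = qJ + qI := by simp [hA]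
  have h10 : A 1 0 = -qI := by simp [hA]
  have h11 : A 1 1 = 1 := by simp [hA]
  have hrow : A 0 = (qJ + qI) • A 1 := by
    funext j
    fin_cases j
    · show A 0 0 = (qJ + qI) * A 1 0
      rw [h00, h10]
      ext <;> simp [Quaternion.re_mul, Quaternion.imI_mul, Quaternion.imJ_mul, Quaternion.imK_mul, Quaternion.re_one, Quaternion.imI_one, Quaternion.imJ_one, Quaternion.imK_one, Quaternion.re_zero, Quaternion.imI_zero, Quaternion.imJ_zero, Quaternion.imK_zero] <;> simp [qI, qJ]
    · show A 0 1 = (qJ + qI) * A 1 1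
      rw [h01, h11, mul_one]
  have hA1ne : A 1 ≠ 0 := by
    intro h
    have := congrFun h 1
    rw [h11] at this
    exact one_ne_zero this
  constructor
  · -- left rank = 1
    have hspan : Submodule.span (Quaternion ℝ) (Set.range (fun i j => A i j)) =
        Submodule.span (Quaternion ℝ) {A 1} := by
      rw [hrange]
      apply le_antisymm
      · rw [Submodule.span_le]
        rintro x (rfl | rfl)
        · rw [hrow]
          exact Submodule.smul_mem _ _ (Submodule.subset_span rfl)
        · exact Submodule.subset_span rfl
      · exact Submodule.span_mono (by simp)
    rw [rowLeftRank, hspan, rank_span_set (LinearIndepOn.singleton (v := id) hA1ne),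
      Cardinal.mk_singleton]
    simp
  · -- right rank = 2
    have hli : LinearIndependent (Quaternion ℝ)ᵐᵒᵖ (fun i => A i) := by
      rw [show (fun i => A i) = ![A 0, A 1] by funext i; fin_cases i <;> rfl]
      rw [LinearIndependent.pair_iff]
      intro s t hst
      set c0 := s.unop with hc0
      set c1 := t.unop with hc1
      have eq1 : A 0 1 * c0 + A 1 1 * c1 = 0 := by
        have := congrFun hst 1
        simpa [op_smul_eq_mul, hc0, hc1] using this
      have eq0 : A 0 0 * c0 + A 1 0 * c1 = 0 := by
        have := congrFun hst 0
        simpa [op_smul_eq_mul, hc0, hc1] using this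
      rw [h01, h11, one_mul] at eq1
      rw [h00, h10] at eq0
      have hc1eq : c1 = -((qJ + qI) * c0) := by
        rw [eq_neg_of_add_eq_zero_right eq1]
      rw [hc1eq, neg_mul_neg, ← mul_assoc, ← add_mul] at eq0
      have key : ((1 - qJ * qI) + qI * (qJ + qI)) * c0 = 0 := by
        rw [add_mul, mul_assoc]; rw [add_mul, mul_assoc] at eq0; exact eq0
      have hcoef : ((1 : Quaternion ℝ) - qJ * qI) + qI * (qJ + qI) ≠ 0 := by
        intro h
        rw [Quaternion.ext_iff] at h
        simp [Quaternion.re_mul, Quaternion.imI_mul, Quaternion.imJ_mul, Quaternion.imK_mul, Quaternion.re_one, Quaternion.imI_one, Quaternion.imJ_one, Quaternion.imK_one, Quaternion.re_zero, Quaternion.imI_zero, Quaternion.imJ_zero, Quaternion.imK_zero] at h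
        simp [qI, qJ] at h
      have hc0z : c0 = 0 := by
        rcases mul_eq_zero.mp key with h | h
        · exact absurd h hcoef
        · exact h
      have hc1z : c1 = 0 := by rw [hc1eq, hc0z, mul_zero, neg_zero]
      constructor
      · rw [← MulOpposite.op_unop s, ← hc0, hc0z, MulOpposite.op_zero]
      · rw [← MulOpposite.op_unop t, ← hc1, hc1z, MulOpposite.op_zero]
    rw [rowRightRank, hv, rank_span hli,
      Cardinal.mk_range_eq _ hli.injective]
    simp
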